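/- A Metzler matrix A ∈ ℝⁿˣⁿ is Hurwitz (all eigenvalues have negative real part) if and only if A is invertible and A⁻¹ is entrywise nonpositive. -/

import Mathlib

open Filter Topology Finset

attribute [local instance] Matrix.linftyOpNormedRing Matrix.linftyOpNormedAlgebra

namespace Stmt7Aux

variable {n : ℕ}

lemma entry_nonneg_mul {M N : Matrix (Fin n) (Fin n) ℝ} (hM : ∀ i j, 0 ≤ M i j)
    (hN : ∀ i j, 0 ≤ N i j) : ∀ i j, 0 ≤ (M * N) i j := by
  intro i j
  rw [Matrix.mul_apply]
  exact Finset.sum_nonneg fun t _ => mul_nonneg (hM i t) (hN t j)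

lemma entry_nonneg_pow {M : Matrix (Fin n) (Fin n) ℝ} (hM : ∀ i j, 0 ≤ M i j) (k : ℕ) :
    ∀ i j, 0 ≤ (M ^ k) i j := by
  induction k with
  | zero => intro i j; rw [pow_zero, Matrix.one_apply]; split_ifs <;> norm_num
  | succ k ih => rw [pow_succ]; exact entry_nonneg_mul ih hM

lemma mem_spectrum_iff_det' {M : Matrix (Fin n) (Fin n) ℂ} {μ : ℂ} :
    μ ∈ spectrum ℂ M ↔ (μ • (1 : Matrix (Fin n) (Fin n) ℂ) - M).det = 0 := by
  rw [spectrum.mem_iff, Matrix.isUnit_iff_isUnit_det, isUnit_iff_ne_zero, not_not,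
    Algebra.algebraMap_eq_smul_one]

/-- entry norm is at most the linfty operator norm -/
lemma entry_norm_le (M : Matrix (Fin n) (Fin n) ℂ) (i j : Fin n) : ‖M i j‖ ≤ ‖M‖ := by
  have h1 : ‖M i j‖₊ ≤ ∑ j' : Fin n, ‖M i j'‖₊ :=
    Finset.single_le_sum (f := fun j' => ‖M i j'‖₊) (fun _ _ => zero_le) (Finset.mem_univ j)
  have h2 : (∑ j' : Fin n, ‖M i j'‖₊) ≤ Finset.univ.sup fun i => ∑ j' : Fin n, ‖M i j'‖₊ :=
    Finset.le_sup (f := fun i => ∑ j' : Fin n, ‖M i j'‖₊) (Finset.mem_univ i)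
  have := (h1.trans h2)
  rw [← Matrix.linfty_opNNNorm_def] at this
  exact this

/-- If every element of the spectrum has norm < 1, powers tend to zero in norm. -/
lemma norm_pow_tendsto_zero [NeZero n] (M : Matrix (Fin n) (Fin n) ℂ)
    (h : ∀ μ ∈ spectrum ℂ M, ‖μ‖ < 1) :
    Tendsto (fun k : ℕ => ‖M ^ k‖) atTop (𝓝 0) := by
  have hfin : (spectrum ℂ M).Finite := Matrix.finite_spectrum M
  set t : NNReal := hfin.toFinset.sup fun μ => ‖μ‖₊ with ht
  have ht1 : t < 1 := by
    rw [ht, Finset.sup_lt_iff (by norm_num : (⊥ : NNReal) < 1)]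
    intro μ hμ
    have := h μ (hfin.mem_toFinset.mp hμ)
    simpa [← NNReal.coe_lt_coe] using this
  have hrad : spectralRadius ℂ M ≤ (t : ENNReal) := by
    rw [spectralRadius]
    refine iSup₂_le fun μ hμ => ?_
    exact_mod_cast ENNReal.coe_le_coe.mpr
      (Finset.le_sup (f := fun μ => ‖μ‖₊) (hfin.mem_toFinset.mpr hμ))
  obtain ⟨r, htr, hr1⟩ := exists_between ht1
  have hradr : spectralRadius ℂ M < (r : ENNReal) :=
    lt_of_le_of_lt hrad (by exact_mod_cast htr)
  have H := spectrum.pow_nnnorm_pow_one_div_tendsto_nhds_spectralRadius M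
  have hev : ∀ᶠ k : ℕ in atTop, (‖M ^ k‖₊ : ENNReal) ^ (1 / (k : ℝ)) < (r : ENNReal) :=
    H.eventually_lt_const hradr
  have hev2 : ∀ᶠ k : ℕ in atTop, ‖M ^ k‖ ≤ (r : ℝ) ^ k := by
    filter_upwards [hev, eventually_ge_atTop 1] with k hk hk1
    have hk0 : (k : ℝ) ≠ 0 := by positivity
    have : ((‖M ^ k‖₊ : ENNReal) ^ (1 / (k : ℝ))) ^ (k : ℝ) ≤ ((r : ENNReal)) ^ (k : ℝ) :=
      ENNReal.rpow_le_rpow hk.le (by positivity)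
    rw [← ENNReal.rpow_mul, one_div, inv_mul_cancel₀ hk0, ENNReal.rpow_one,
      ENNReal.rpow_natCast] at this
    have h2 : ‖M ^ k‖₊ ≤ r ^ k := by exact_mod_cast this
    calc ‖M ^ k‖ = ((‖M ^ k‖₊ : NNReal) : ℝ) := rfl
      _ ≤ ((r ^ k : NNReal) : ℝ) := by exact_mod_cast h2
      _ = (r : ℝ) ^ k := by push_cast; ring
  refine squeeze_zero_norm' ?_
    (tendsto_pow_atTop_nhds_zero_of_lt_one r.coe_nonneg (by exact_mod_cast hr1))
  filter_upwards [hev2] with k hk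
  simpa using hk

lemma neumann (A : Matrix (Fin n) (Fin n) ℝ) (hA : IsUnit A) {s : ℝ} (hs : 0 < s) (m : ℕ) :
    A⁻¹ = (s⁻¹ • (A + s • 1)) ^ m * A⁻¹
      - s⁻¹ • (∑ k ∈ Finset.range m, (s⁻¹ • (A + s • 1)) ^ k) := by
  set P := s⁻¹ • (A + s • (1 : Matrix (Fin n) (Fin n) ℝ)) with hP
  have hs0 : s ≠ 0 := hs.ne'
  have hP1 : P - 1 = s⁻¹ • A := by
    rw [hP, smul_add, smul_smul, inv_mul_cancel₀ hs0, one_smul]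
    abel
  have hgeom := geom_sum_mul P m
  rw [hP1] at hgeom
  have hinv : A * A⁻¹ = 1 := Matrix.mul_nonsing_inv A ((Matrix.isUnit_iff_isUnit_det A).mp hA)
  have key : s⁻¹ • (∑ k ∈ Finset.range m, P ^ k) = P ^ m * A⁻¹ - A⁻¹ := by
    calc s⁻¹ • (∑ k ∈ Finset.range m, P ^ k)
        = s⁻¹ • ((∑ k ∈ Finset.range m, P ^ k) * (A * A⁻¹)) := by rw [hinv, mul_one]
      _ = ((∑ k ∈ Finset.range m, P ^ k) * (s⁻¹ • A)) * A⁻¹ := by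
          rw [Matrix.mul_smul, Matrix.smul_mul, mul_assoc]
      _ = (P ^ m - 1) * A⁻¹ := by rw [hgeom]
      _ = P ^ m * A⁻¹ - A⁻¹ := by rw [sub_mul, one_mul]
  rw [key]; abel

lemma map_complexify (A : Matrix (Fin n) (Fin n) ℝ) (s : ℝ) :
    (s⁻¹ • (A + s • (1 : Matrix (Fin n) (Fin n) ℝ))).map Complex.ofReal
      = ((s:ℂ))⁻¹ • ((A.map Complex.ofReal) + (s:ℂ) • 1) := by
  ext i j
  rcases eq_or_ne i j with rfl | hij
  · simp [Matrix.map_apply, Matrix.smul_apply, Matrix.add_apply, Matrix.one_apply]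
    ring
  · simp [Matrix.map_apply, Matrix.smul_apply, Matrix.add_apply, Matrix.one_apply, hij]

lemma map_pow' (P : Matrix (Fin n) (Fin n) ℝ) (k : ℕ) :
    (P ^ k).map Complex.ofReal = (P.map Complex.ofReal) ^ k := by
  have := map_pow (Complex.ofRealHom.mapMatrix (m := Fin n)) P k
  simp only [RingHom.mapMatrix_apply] at this
  exact this

lemma entry_nonneg_P (A : Matrix (Fin n) (Fin n) ℝ)
    (hMetzler : ∀ i j, i ≠ j → 0 ≤ A i j) {s : ℝ} (hs : 0 < s)
    (hsdiag : ∀ i, 0 ≤ A i i + s) :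
    ∀ i j, 0 ≤ (s⁻¹ • (A + s • (1 : Matrix (Fin n) (Fin n) ℝ))) i j := by
  intro i j
  have he : (s⁻¹ • (A + s • (1 : Matrix (Fin n) (Fin n) ℝ))) i j
      = s⁻¹ * (A i j + s * (if i = j then 1 else 0)) := by
    simp [Matrix.smul_apply, Matrix.add_apply, Matrix.one_apply]
  rw [he]
  rcases eq_or_ne i j with rfl | hij
  · rw [if_pos rfl, mul_one]
    exact mul_nonneg (inv_nonneg.mpr hs.le) (hsdiag i)
  · simp only [if_neg hij, mul_zero, add_zero]
    exact mul_nonneg (inv_nonneg.mpr hs.le) (hMetzler i j hij)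

end Stmt7Aux

open Stmt7Aux

/-- A Metzler matrix is Hurwitz iff it is invertible with
entrywise nonpositive inverse. -/
theorem stmt7 (n : ℕ) (A : Matrix (Fin n) (Fin n) ℝ)
    (hMetzler : ∀ i j, i ≠ j → 0 ≤ A i j) :
    (∀ μ ∈ spectrum ℂ (A.map (Complex.ofReal)), μ.re < 0) ↔
      (IsUnit A ∧ ∀ i j, A⁻¹ i j ≤ 0) := by
  rcases Nat.eq_zero_or_pos n with hn | hn
  · subst hn
    refine iff_of_true (fun μ hμ => absurd (isUnit_of_subsingleton _) (spectrum.mem_iff.mp hμ))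
      ⟨isUnit_of_subsingleton _, fun i _ => i.elim0⟩
  haveI : NeZero n := ⟨hn.ne'⟩
  set Ac := A.map Complex.ofReal with hAc
  constructor
  · intro h
    -- A is invertible
    have hunit : IsUnit A := by
      rw [Matrix.isUnit_iff_isUnit_det, isUnit_iff_ne_zero]
      intro hdet
      have hdetC : Ac.det = 0 := by
        have h2 : ((A.det : ℂ)) = Ac.det := RingHom.map_det Complex.ofRealHom A
        rw [← h2, hdet]; simp
      have h0 : (0 : ℂ) ∈ spectrum ℂ Ac := by
        rw [mem_spectrum_iff_det', zero_smul, zero_sub, Matrix.det_neg, hdetC, mul_zero]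
      simpa using h 0 h0
    refine ⟨hunit, ?_⟩
    -- choose the shift s
    have hfin : (spectrum ℂ Ac).Finite := Matrix.finite_spectrum Ac
    set S1 : ℝ := ∑ i : Fin n, |A i i| with hS1def
    set S2 : ℝ := ∑ μ ∈ hfin.toFinset, ‖μ‖ ^ 2 / (-(2 * μ.re)) with hS2def
    have hS1 : 0 ≤ S1 := Finset.sum_nonneg fun i _ => abs_nonneg _
    have hS2nonneg : ∀ μ ∈ hfin.toFinset, 0 ≤ ‖μ‖ ^ 2 / (-(2 * μ.re)) := by
      intro μ hμ
      have hre := h μ (hfin.mem_toFinset.mp hμ)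
      have : 0 < -(2 * μ.re) := by linarith
      positivity
    have hS2 : 0 ≤ S2 := Finset.sum_nonneg hS2nonneg
    set s : ℝ := 1 + S1 + S2 with hsdef
    have hs : 0 < s := by rw [hsdef]; linarith
    have hsdiag : ∀ i, 0 ≤ A i i + s := by
      intro i
      have h1 : |A i i| ≤ S1 :=
        Finset.single_le_sum (f := fun i => |A i i|) (fun j _ => abs_nonneg _) (Finset.mem_univ i)
      have h2 := neg_abs_le (A i i)
      rw [hsdef]; linarith
    have hspec : ∀ μ ∈ spectrum ℂ Ac, ‖μ + (s : ℂ)‖ < s := by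
      intro μ hμ
      have hre := h μ hμ
      have hterm : ‖μ‖ ^ 2 / (-(2 * μ.re)) ≤ S2 :=
        Finset.single_le_sum hS2nonneg (hfin.mem_toFinset.mpr hμ)
      have hlt : ‖μ‖ ^ 2 / (-(2 * μ.re)) < s := by rw [hsdef]; linarith
      have h2 : ‖μ‖ ^ 2 < s * (-(2 * μ.re)) := by
        rwa [div_lt_iff₀ (by linarith : (0:ℝ) < -(2 * μ.re))] at hlt
      have e1 : ‖μ + (s : ℂ)‖ ^ 2 = (μ.re + s) ^ 2 + μ.im ^ 2 := by
        rw [Complex.sq_norm, Complex.normSq_apply]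
        simp
        ring
      have e2 : ‖μ‖ ^ 2 = μ.re ^ 2 + μ.im ^ 2 := by
        rw [Complex.sq_norm, Complex.normSq_apply]
        ring
      nlinarith [norm_nonneg (μ + (s : ℂ)), hs]
    -- set up P and its complexification
    set P : Matrix (Fin n) (Fin n) ℝ := s⁻¹ • (A + s • 1) with hPdef
    have hPnn : ∀ i j, 0 ≤ P i j := entry_nonneg_P A hMetzler hs hsdiag
    set Pc : Matrix (Fin n) (Fin n) ℂ := ((s:ℂ))⁻¹ • (Ac + (s:ℂ) • 1) with hPcdef
    have hPmap : P.map Complex.ofReal = Pc := map_complexify A s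
    have hsC : (s : ℂ) ≠ 0 := by exact_mod_cast hs.ne'
    -- all eigenvalues of Pc lie in the open unit disc
    have hPcspec : ∀ lam ∈ spectrum ℂ Pc, ‖lam‖ < 1 := by
      intro lam hlam
      have hdet := mem_spectrum_iff_det'.mp hlam
      have hkey : ((s:ℂ) * lam - s) • (1 : Matrix (Fin n) (Fin n) ℂ) - Ac
          = (s : ℂ) • (lam • (1 : Matrix (Fin n) (Fin n) ℂ) - Pc) := by
        rw [hPcdef]
        match_scalars <;> field_simp <;> ring
      have hmem : ((s:ℂ) * lam - s) ∈ spectrum ℂ Ac := by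
        rw [mem_spectrum_iff_det', hkey, Matrix.det_smul, hdet, mul_zero]
      have h3 := hspec _ hmem
      have h4 : ((s:ℂ) * lam - s) + s = (s:ℂ) * lam := by ring
      rw [h4, norm_mul, Complex.norm_real, Real.norm_eq_abs, abs_of_pos hs] at h3
      have := (mul_lt_iff_lt_one_right hs).mp (by linarith [h3] : s * ‖lam‖ < s)
      linarith [this]
    -- powers of P tend to zero entrywise
    have hnorm := norm_pow_tendsto_zero Pc hPcspec
    have hentry : ∀ i j, Tendsto (fun k : ℕ => (P ^ k) i j) atTop (𝓝 0) := by
      intro i j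
      refine squeeze_zero_norm (fun k => ?_) hnorm
      have he : ‖(P ^ k) i j‖ = ‖(Pc ^ k) i j‖ := by
        rw [← hPmap, ← map_pow']
        simp [Matrix.map_apply]
      rw [he]
      exact entry_norm_le _ i j
    -- conclude nonpositivity of the inverse entries
    intro i j
    have hg : Tendsto (fun m : ℕ => (P ^ m * A⁻¹) i j) atTop (𝓝 0) := by
      have hrw : (fun m : ℕ => (P ^ m * A⁻¹) i j)
          = fun m : ℕ => ∑ t : Fin n, (P ^ m) i t * A⁻¹ t j := by
        funext m; rw [Matrix.mul_apply]
      rw [hrw]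
      have := tendsto_finset_sum (Finset.univ : Finset (Fin n))
        (fun t _ => (hentry i t).mul_const (A⁻¹ t j))
      simpa using this
    refine ge_of_tendsto' hg fun m => ?_
    have hneu := congrArg (fun X : Matrix (Fin n) (Fin n) ℝ => X i j) (neumann A hunit hs m)
    simp only [Matrix.sub_apply, Matrix.smul_apply, Matrix.sum_apply, smul_eq_mul, ← hPdef] at hneu
    have hsum : 0 ≤ ∑ k ∈ Finset.range m, (P ^ k) i j :=
      Finset.sum_nonneg fun k _ => entry_nonneg_pow hPnn k i j
    have hinvnn : 0 ≤ s⁻¹ := inv_nonneg.mpr hs.le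
    nlinarith [hneu, mul_nonneg hinvnn hsum]
  · rintro ⟨hunit, hinvle⟩
    intro μ hμ
    by_contra hrecon
    push_neg at hrecon
    have hre : 0 ≤ μ.re := hrecon
    set s : ℝ := 1 + ∑ i : Fin n, |A i i| with hsdef
    have hsum0 : 0 ≤ ∑ i : Fin n, |A i i| := Finset.sum_nonneg fun i _ => abs_nonneg _
    have hs : 0 < s := by rw [hsdef]; linarith
    have hsdiag : ∀ i, 0 ≤ A i i + s := by
      intro i
      have h1 : |A i i| ≤ ∑ i : Fin n, |A i i| :=
        Finset.single_le_sum (f := fun i => |A i i|) (fun j _ => abs_nonneg _) (Finset.mem_univ i)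
      have h2 := neg_abs_le (A i i)
      rw [hsdef]; linarith
    set P : Matrix (Fin n) (Fin n) ℝ := s⁻¹ • (A + s • 1) with hPdef
    have hPnn : ∀ i j, 0 ≤ P i j := entry_nonneg_P A hMetzler hs hsdiag
    set Pc : Matrix (Fin n) (Fin n) ℂ := ((s:ℂ))⁻¹ • (Ac + (s:ℂ) • 1) with hPcdef
    have hPmap : P.map Complex.ofReal = Pc := map_complexify A s
    have hsC : (s : ℂ) ≠ 0 := by exact_mod_cast hs.ne'
    -- entrywise convergence of powers of P to zero
    have hentry : ∀ i j, Tendsto (fun k : ℕ => (P ^ k) i j) atTop (𝓝 0) := by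
      intro i j
      have hb : ∀ m : ℕ, ∑ k ∈ Finset.range m, (P ^ k) i j ≤ s * (-(A⁻¹ i j)) := by
        intro m
        have hneu := congrArg (fun X : Matrix (Fin n) (Fin n) ℝ => X i j) (neumann A hunit hs m)
        simp only [Matrix.sub_apply, Matrix.smul_apply, Matrix.sum_apply, smul_eq_mul,
          ← hPdef] at hneu
        have hP1 : (P ^ m * A⁻¹) i j ≤ 0 := by
          rw [Matrix.mul_apply]
          exact Finset.sum_nonpos fun t _ =>
            mul_nonpos_of_nonneg_of_nonpos (entry_nonneg_pow hPnn m i t) (hinvle t j)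
        have h2 : s⁻¹ * (∑ k ∈ Finset.range m, (P ^ k) i j) ≤ -(A⁻¹ i j) := by linarith
        calc ∑ k ∈ Finset.range m, (P ^ k) i j
            = s * (s⁻¹ * ∑ k ∈ Finset.range m, (P ^ k) i j) := by field_simp
          _ ≤ s * (-(A⁻¹ i j)) := mul_le_mul_of_nonneg_left h2 hs.le
      exact (summable_of_sum_range_le (fun k => entry_nonneg_pow hPnn k i j) hb).tendsto_atTop_zero
    -- an eigenvector of Pc with eigenvalue lam, |lam| ≥ 1
    set lam : ℂ := (μ + s) / s with hlamdef
    have hdetA : (μ • (1 : Matrix (Fin n) (Fin n) ℂ) - Ac).det = 0 := mem_spectrum_iff_det'.mp hμ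
    have hkey : lam • (1 : Matrix (Fin n) (Fin n) ℂ) - Pc = (s:ℂ)⁻¹ • (μ • 1 - Ac) := by
      rw [hlamdef, hPcdef]
      match_scalars <;> field_simp <;> ring
    have hdetP : (lam • (1 : Matrix (Fin n) (Fin n) ℂ) - Pc).det = 0 := by
      rw [hkey, Matrix.det_smul, hdetA, mul_zero]
    obtain ⟨v, hv0, hveq⟩ := Matrix.exists_mulVec_eq_zero_iff.mpr hdetP
    have heig : Pc.mulVec v = lam • v := by
      rw [Matrix.sub_mulVec, Matrix.smul_mulVec, Matrix.one_mulVec, sub_eq_zero] at hveq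
      exact hveq.symm
    have hpow : ∀ k : ℕ, (Pc ^ k).mulVec v = lam ^ k • v := by
      intro k
      induction k with
      | zero => simp [Matrix.one_mulVec]
      | succ k ih =>
        rw [pow_succ, ← Matrix.mulVec_mulVec, heig, Matrix.mulVec_smul, ih, smul_smul,
          ← pow_succ']
    haveI : Nonempty (Fin n) := Fin.pos_iff_nonempty.mp hn
    obtain ⟨t, -, hmax⟩ := Finset.exists_max_image (Finset.univ : Finset (Fin n))
      (fun i => ‖v i‖) Finset.univ_nonempty
    obtain ⟨j0, hj0⟩ := Function.ne_iff.mp hv0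
    have hc : 0 < ‖v t‖ := lt_of_lt_of_le (norm_pos_iff.mpr hj0) (hmax j0 (Finset.mem_univ _))
    have hbound : ∀ k : ℕ, ‖lam‖ ^ k * ‖v t‖ ≤ (∑ j : Fin n, (P ^ k) t j) * ‖v t‖ := by
      intro k
      have h1 : (lam ^ k • v) t = ∑ j : Fin n, (Pc ^ k) t j * v j := by
        rw [← hpow k]
        simp [Matrix.mulVec, dotProduct]
      calc ‖lam‖ ^ k * ‖v t‖ = ‖(lam ^ k • v) t‖ := by
            rw [Pi.smul_apply, smul_eq_mul, norm_mul, norm_pow]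
        _ = ‖∑ j : Fin n, (Pc ^ k) t j * v j‖ := by rw [h1]
        _ ≤ ∑ j : Fin n, ‖(Pc ^ k) t j * v j‖ := norm_sum_le _ _
        _ ≤ ∑ j : Fin n, (P ^ k) t j * ‖v t‖ := by
            refine Finset.sum_le_sum fun j _ => ?_
            rw [norm_mul]
            have he : ‖(Pc ^ k) t j‖ = (P ^ k) t j := by
              rw [← hPmap, ← map_pow', Matrix.map_apply, Complex.norm_real, Real.norm_eq_abs,
                abs_of_nonneg (entry_nonneg_pow hPnn k t j)]
            rw [he]
            exact mul_le_mul_of_nonneg_left (hmax j (Finset.mem_univ _))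
              (entry_nonneg_pow hPnn k t j)
        _ = (∑ j : Fin n, (P ^ k) t j) * ‖v t‖ := by rw [Finset.sum_mul]
    have htend : Tendsto (fun k : ℕ => (∑ j : Fin n, (P ^ k) t j) * ‖v t‖) atTop (𝓝 0) := by
      have h0 := tendsto_finset_sum (Finset.univ : Finset (Fin n)) (fun j _ => hentry t j)
      have := h0.mul_const ‖v t‖
      simpa using this
    have hlam1 : ‖lam‖ < 1 := by
      by_contra hge
      push_neg at hge
      have hvle : ‖v t‖ ≤ 0 := by
        refine ge_of_tendsto' htend fun k => ?_
        calc ‖v t‖ = 1 * ‖v t‖ := (one_mul _).symm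
          _ ≤ ‖lam‖ ^ k * ‖v t‖ :=
              mul_le_mul_of_nonneg_right (one_le_pow₀ hge) (norm_nonneg _)
          _ ≤ (∑ j : Fin n, (P ^ k) t j) * ‖v t‖ := hbound k
      linarith
    -- but ‖lam‖ ≥ 1 since Re μ ≥ 0
    have e1 : ‖μ + (s : ℂ)‖ ^ 2 = (μ.re + s) ^ 2 + μ.im ^ 2 := by
      rw [Complex.sq_norm, Complex.normSq_apply]
      simp
      ring
    have hge : s ≤ ‖μ + (s : ℂ)‖ := by
      nlinarith [norm_nonneg (μ + (s : ℂ)), hre, hs, sq_nonneg μ.im]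
    have hge1 : (1 : ℝ) ≤ ‖lam‖ := by
      rw [hlamdef, norm_div, Complex.norm_real, Real.norm_eq_abs, abs_of_pos hs]
      exact (one_le_div hs).mpr hge
    linarith
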